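/- Let n ≥ 2, R > 0, T > 0, and let ĉ, c̄ be constants with 0 < ĉ < 1 and c̄ > ĉ. Define Ψ̄(x,t) = R² (4π(T−t))^{−(n/2)c̄} e^{ĉ n |x|²/(4(T−t))}. Then for all x ∈ ℝⁿ and 0 ≤ t < T one has the identity ∂_t Ψ̄ − (1/n) ΔΨ̄ = [ (ĉ(1−ĉ)/2) · |x|²/(T−t)² + (c̄−ĉ) · 1/(T−t) ] · (n/2) Ψ̄, and there exists a constant c₁ > 0 depending only on ĉ and c̄ such that ∂_t Ψ̄ − (1/n) ΔΨ̄ ≥ c₁ [ 1/(T−t) + |x|²/(T−t)² ] Ψ̄ > 0; that is, Ψ̄ is a strict supersolution of the heat equation ∂_t ρ = (1/n) Δρ on ℝⁿ × [0, T). -/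

import Mathlib

/-- Partial derivative in the `i`-th coordinate direction. -/
noncomputable def pd {n : ℕ} (i : Fin n) (f : EuclideanSpace ℝ (Fin n) → ℝ)
    (x : EuclideanSpace ℝ (Fin n)) : ℝ :=
  fderiv ℝ f x (EuclideanSpace.single i (1 : ℝ))

lemma gauss_hasFDerivAt {n : ℕ} (c K : ℝ) (x : EuclideanSpace ℝ (Fin n)) :
    HasFDerivAt (fun z : EuclideanSpace ℝ (Fin n) => K * Real.exp (c * ‖z‖ ^ 2))
      ((K * Real.exp (c * ‖x‖ ^ 2) * (2 * c)) • (innerSL ℝ x)) x := by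
  have h1 : HasFDerivAt (fun z : EuclideanSpace ℝ (Fin n) => ‖z‖ ^ 2)
      ((2 : ℝ) • (innerSL ℝ x)) x := by
    have h := (hasFDerivAt_id x).norm_sq
    simp only [id] at h
    refine h.congr_fderiv ?_
    ext v
    simp
  have h2 := (((h1.const_mul c).exp).const_mul K)
  refine h2.congr_fderiv ?_
  ext v
  simp
  ring

lemma pd_gauss {n : ℕ} (c K : ℝ) (i : Fin n) (x : EuclideanSpace ℝ (Fin n)) :
    pd i (fun z => K * Real.exp (c * ‖z‖ ^ 2)) x
      = K * Real.exp (c * ‖x‖ ^ 2) * (2 * c) * x i := by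
  rw [pd, (gauss_hasFDerivAt c K x).fderiv]
  simp [real_inner_smul_left, EuclideanSpace.inner_single_right]

lemma pd2_gauss {n : ℕ} (c K : ℝ) (i : Fin n) (x : EuclideanSpace ℝ (Fin n)) :
    pd i (fun y => pd i (fun z => K * Real.exp (c * ‖z‖ ^ 2)) y) x
      = K * Real.exp (c * ‖x‖ ^ 2) * (2 * c)
        + K * Real.exp (c * ‖x‖ ^ 2) * (4 * c ^ 2) * (x i) ^ 2 := by
  have hfun : (fun y => pd i (fun z => K * Real.exp (c * ‖z‖ ^ 2)) y)
      = fun y : EuclideanSpace ℝ (Fin n) => (K * Real.exp (c * ‖y‖ ^ 2) * (2 * c)) * y i := by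
    funext y; exact pd_gauss c K i y
  rw [hfun, pd]
  have hA : HasFDerivAt (fun y : EuclideanSpace ℝ (Fin n) => K * Real.exp (c * ‖y‖ ^ 2) * (2 * c))
      ((2 * c) • ((K * Real.exp (c * ‖x‖ ^ 2) * (2 * c)) • (innerSL ℝ x))) x :=
    (gauss_hasFDerivAt c K x).mul_const (2 * c)
  have hB : HasFDerivAt (𝕜 := ℝ) (fun y : EuclideanSpace ℝ (Fin n) => y i)
      (EuclideanSpace.proj i) x := by
    have := (EuclideanSpace.proj i : EuclideanSpace ℝ (Fin n) →L[ℝ] ℝ).hasFDerivAt (x := x)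
    simpa using this
  have h := hA.mul hB
  rw [HasFDerivAt.fderiv (f := fun y : EuclideanSpace ℝ (Fin n) => K * Real.exp (c * ‖y‖ ^ 2) * (2 * c) * y i) h]
  simp [real_inner_smul_left, EuclideanSpace.inner_single_right]
  ring

lemma sum_pd2_gauss {n : ℕ} (c K : ℝ) (x : EuclideanSpace ℝ (Fin n)) :
    ∑ i, pd i (fun y => pd i (fun z => K * Real.exp (c * ‖z‖ ^ 2)) y) x
      = K * Real.exp (c * ‖x‖ ^ 2) * (2 * c * n + 4 * c ^ 2 * ‖x‖ ^ 2) := by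
  have hs : ∑ i, (x i) ^ 2 = ‖x‖ ^ 2 := by
    rw [EuclideanSpace.norm_sq_eq]
    simp
  simp only [pd2_gauss]
  rw [Finset.sum_add_distrib, Finset.sum_const, Finset.card_univ, Fintype.card_fin,
    ← Finset.mul_sum, hs]
  ring

/-- Growing Gaussian supersolution of the heat equation `∂_tρ = (1/n)Δρ`
(the case `α = 0`): for `0 < ĉ < 1` and `c̄ > ĉ` there is a constant
`c₁ > 0`, depending only on `ĉ` and `c̄`, such that for every `n ≥ 2`,
`R, T > 0`, the function
`Ψ̄(x,t) = R²(4π(T−t))^{−(n/2)c̄} e^{ĉn|x|²/(4(T−t))}` satisfies, for all `x`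
and `0 ≤ t < T`, the identity
`∂_tΨ̄ − (1/n)ΔΨ̄ = [(ĉ(1−ĉ)/2)|x|²/(T−t)² + (c̄−ĉ)/(T−t)]·(n/2)Ψ̄`
together with `∂_tΨ̄ − (1/n)ΔΨ̄ ≥ c₁[1/(T−t)+|x|²/(T−t)²]Ψ̄ > 0`. -/
theorem gaussian_heat_supersolution (ch cb : ℝ) (h0 : 0 < ch) (h1 : ch < 1)
    (h2 : ch < cb) :
    ∃ c₁ > (0 : ℝ), ∀ n : ℕ, 2 ≤ n → ∀ R T : ℝ, 0 < R → 0 < T →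
      ∀ Ψ : EuclideanSpace ℝ (Fin n) → ℝ → ℝ,
      (∀ x s, Ψ x s = R ^ 2 * (4 * Real.pi * (T - s)) ^ (-((n : ℝ) / 2) * cb) *
        Real.exp ((ch * n * ‖x‖ ^ 2) / (4 * (T - s)))) →
      ∀ (x : EuclideanSpace ℝ (Fin n)) (t : ℝ), 0 ≤ t → t < T →
        (deriv (Ψ x) t -
            (1 / (n : ℝ)) * ∑ i, pd i (fun y => pd i (fun z => Ψ z t) y) x =
          ((ch * (1 - ch) / 2) * ‖x‖ ^ 2 / (T - t) ^ 2 +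
              (cb - ch) * (1 / (T - t))) * ((n : ℝ) / 2) * Ψ x t) ∧
        (deriv (Ψ x) t -
            (1 / (n : ℝ)) * ∑ i, pd i (fun y => pd i (fun z => Ψ z t) y) x ≥
          c₁ * (1 / (T - t) + ‖x‖ ^ 2 / (T - t) ^ 2) * Ψ x t) ∧
        (c₁ * (1 / (T - t) + ‖x‖ ^ 2 / (T - t) ^ 2) * Ψ x t > 0) := by
  have hc1pos : 0 < min (ch * (1 - ch) / 2) (cb - ch) := by
    apply lt_min
    · nlinarith
    · linarith
  refine ⟨min (ch * (1 - ch) / 2) (cb - ch), hc1pos, ?_⟩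
  intro n hn R T hR hT Ψ hΨ x t ht htT
  have hτ : 0 < T - t := sub_pos.mpr htT
  have hπ : 0 < Real.pi := Real.pi_pos
  have hnpos : (0 : ℝ) < n := by positivity
  set β : ℝ := -((n : ℝ) / 2) * cb with hβ
  set c : ℝ := ch * n / (4 * (T - t)) with hc
  set K : ℝ := R ^ 2 * (4 * Real.pi * (T - t)) ^ β with hK
  set s : ℝ := ‖x‖ ^ 2 with hs
  have hs0 : 0 ≤ s := by positivity
  -- spatial part
  have hspace : (fun z => Ψ z t) = fun z => K * Real.exp (c * ‖z‖ ^ 2) := by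
    funext z
    rw [hΨ, hK]
    congr 2
    rw [hc]
    field_simp
  have hsum : ∑ i, pd i (fun y => pd i (fun z => Ψ z t) y) x
      = K * Real.exp (c * s) * (2 * c * n + 4 * c ^ 2 * s) := by
    rw [hspace]
    exact sum_pd2_gauss c K x
  -- time derivative
  set M : ℝ := ch * n * s / 4 with hM
  have hΨx : Ψ x = fun u : ℝ =>
      R ^ 2 * (4 * Real.pi * (T - u)) ^ β * Real.exp (M * (T - u)⁻¹) := by
    funext u
    rw [hΨ]
    congr 2
    rw [hM, div_eq_mul_inv, div_eq_mul_inv, mul_inv]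
    ring
  have h1 : HasDerivAt (fun u : ℝ => T - u) (-1) t := by
    simpa using (hasDerivAt_id t).const_sub T
  have h2 : HasDerivAt (fun u : ℝ => 4 * Real.pi * (T - u)) (4 * Real.pi * (-1)) t :=
    h1.const_mul _
  have hbase : (4 : ℝ) * Real.pi * (T - t) ≠ 0 := by positivity
  have h3 : HasDerivAt (fun u : ℝ => (4 * Real.pi * (T - u)) ^ β)
      (4 * Real.pi * (-1) * β * (4 * Real.pi * (T - t)) ^ (β - 1)) t := by
    have := h2.rpow_const (p := β) (Or.inl hbase)
    convert this using 1
  have h4 : HasDerivAt (fun u : ℝ => (T - u)⁻¹) (-(-1) / (T - t) ^ 2) t :=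
    h1.inv (ne_of_gt hτ)
  have h5 : HasDerivAt (fun u : ℝ => Real.exp (M * (T - u)⁻¹))
      (Real.exp (M * (T - t)⁻¹) * (M * (-(-1) / (T - t) ^ 2))) t :=
    ((h4.const_mul M).exp)
  have h6 := (h3.const_mul (R ^ 2)).mul h5
  have hrpow : (4 * Real.pi * (T - t)) ^ (β - 1)
      = (4 * Real.pi * (T - t)) ^ β / (4 * Real.pi * (T - t)) := by
    rw [Real.rpow_sub (by positivity), Real.rpow_one]
  have hE : Real.exp (c * s) = Real.exp (M * (T - t)⁻¹) := by
    congr 1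
    rw [hc, hM]
    field_simp
  have hΨval : Ψ x t = K * Real.exp (M * (T - t)⁻¹) := by
    rw [hΨx]
  have hΨpos : 0 < Ψ x t := by
    rw [hΨval, hK]
    have : (0:ℝ) < (4 * Real.pi * (T - t)) ^ β := Real.rpow_pos_of_pos (by positivity) _
    positivity
  -- the identity
  have hid : deriv (Ψ x) t -
      (1 / (n : ℝ)) * ∑ i, pd i (fun y => pd i (fun z => Ψ z t) y) x =
      ((ch * (1 - ch) / 2) * s / (T - t) ^ 2 +
        (cb - ch) * (1 / (T - t))) * ((n : ℝ) / 2) * Ψ x t := by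
    have hτne : T - t ≠ 0 := ne_of_gt hτ
    have hπne : Real.pi ≠ 0 := ne_of_gt hπ
    have hnne : (n : ℝ) ≠ 0 := ne_of_gt hnpos
    rw [hsum]
    simp only [hΨx]
    rw [HasDerivAt.deriv (f := fun u : ℝ => R ^ 2 * (4 * Real.pi * (T - u)) ^ β * Real.exp (M * (T - u)⁻¹)) h6, hrpow, hE]
    simp only [hβ, hc, hM, hK]
    field_simp
    ring
  refine ⟨hid, ?_, ?_⟩
  · rw [hid]
    have hn2 : (2 : ℝ) ≤ (n : ℝ) := by exact_mod_cast hn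
    have hm1 : min (ch * (1 - ch) / 2) (cb - ch) ≤ ch * (1 - ch) / 2 := min_le_left _ _
    have hm2 : min (ch * (1 - ch) / 2) (cb - ch) ≤ cb - ch := min_le_right _ _
    have hu : 0 < 1 / (T - t) := by positivity
    have hv : 0 ≤ s / (T - t) ^ 2 := by positivity
    have hbr : min (ch * (1 - ch) / 2) (cb - ch) * (1 / (T - t) + s / (T - t) ^ 2)
        ≤ (ch * (1 - ch) / 2) * s / (T - t) ^ 2 + (cb - ch) * (1 / (T - t)) := by
      have e1 : (ch * (1 - ch) / 2) * s / (T - t) ^ 2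
          = (ch * (1 - ch) / 2) * (s / (T - t) ^ 2) := by ring
      have t1 := mul_le_mul_of_nonneg_right hm2 hu.le
      have t2 := mul_le_mul_of_nonneg_right hm1 hv
      rw [e1, mul_add]
      linarith
    have hbr0 : 0 ≤ (ch * (1 - ch) / 2) * s / (T - t) ^ 2 + (cb - ch) * (1 / (T - t)) := by
      have : 0 ≤ min (ch * (1 - ch) / 2) (cb - ch) * (1 / (T - t) + s / (T - t) ^ 2) := by
        positivity
      linarith
    have h12 : (1 : ℝ) ≤ (n : ℝ) / 2 := by linarith
    have A := mul_le_mul_of_nonneg_right hbr (le_of_lt hΨpos)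
    have B : 0 ≤ ((ch * (1 - ch) / 2) * s / (T - t) ^ 2 + (cb - ch) * (1 / (T - t))) * Ψ x t :=
      le_trans (by positivity) A
    have C : ((ch * (1 - ch) / 2) * s / (T - t) ^ 2 + (cb - ch) * (1 / (T - t))) * Ψ x t * 1
        ≤ ((ch * (1 - ch) / 2) * s / (T - t) ^ 2 + (cb - ch) * (1 / (T - t))) * Ψ x t
          * ((n : ℝ) / 2) :=
      mul_le_mul_of_nonneg_left h12 B
    calc min (ch * (1 - ch) / 2) (cb - ch) * (1 / (T - t) + s / (T - t) ^ 2) * Ψ x t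
        ≤ ((ch * (1 - ch) / 2) * s / (T - t) ^ 2 + (cb - ch) * (1 / (T - t))) * Ψ x t := A
      _ = ((ch * (1 - ch) / 2) * s / (T - t) ^ 2 + (cb - ch) * (1 / (T - t))) * Ψ x t * 1 := by
          ring
      _ ≤ ((ch * (1 - ch) / 2) * s / (T - t) ^ 2 + (cb - ch) * (1 / (T - t))) * Ψ x t
          * ((n : ℝ) / 2) := C
      _ = ((ch * (1 - ch) / 2) * s / (T - t) ^ 2 + (cb - ch) * (1 / (T - t))) * ((n : ℝ) / 2)
          * Ψ x t := by ring
  · have hu : 0 < 1 / (T - t) + s / (T - t) ^ 2 := by positivity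
    exact mul_pos (mul_pos hc1pos hu) hΨpos
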